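/- arXiv:1704.06733 — 3 statements merged into one kernel-verified Lean document; each statement's English description precedes it below -/
import Mathlib

section
/- Let 0 < α < 1. Then for every integer N ≥ 1, the partial sum Σ_{k=0}^{N} ω_k^{(α)} > 0. -/
open Finset

/-- The coefficients `g_k^{(γ)}`: `g_0 = 1`, `g_k = (1 - (γ+1)/k) g_{k-1}` for `k ≥ 1`. -/
noncomputable def gcoef (γ : ℝ) : ℕ → ℝ
  | 0 => 1
  | k + 1 => (1 - (γ + 1) / (k + 1)) * gcoef γ k

/-- The coefficients `ω_k^{(γ)}`: `ω_0 = (γ/2) g_0` and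
`ω_k = (γ/2) g_k + ((2-γ)/2) g_{k-1}` for `k ≥ 1`. -/
noncomputable def wcoef (γ : ℝ) : ℕ → ℝ
  | 0 => γ / 2 * gcoef γ 0
  | k + 1 => γ / 2 * gcoef γ (k + 1) + (2 - γ) / 2 * gcoef γ k

lemma gcoef_succ (γ : ℝ) (k : ℕ) :
    gcoef γ (k + 1) = (1 - (γ + 1) / ((k : ℝ) + 1)) * gcoef γ k := rfl

lemma wcoef_succ (γ : ℝ) (k : ℕ) :
    wcoef γ (k + 1) = γ / 2 * gcoef γ (k + 1) + (2 - γ) / 2 * gcoef γ k := rfl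

lemma gcoef_shift_pos (α : ℝ) (hα1 : α < 1) : ∀ k : ℕ, 0 < gcoef (α - 1) k := by
  intro k
  induction k with
  | zero => simp [gcoef]
  | succ n ih =>
    have hk1 : (0:ℝ) < (n:ℝ) + 1 := by positivity
    have h : α / ((n:ℝ) + 1) < 1 := by
      rw [div_lt_one hk1]
      linarith [Nat.cast_nonneg (α := ℝ) n]
    have hf : (0:ℝ) < 1 - (α - 1 + 1) / ((n:ℝ) + 1) := by
      have e : α - 1 + 1 = α := by ring
      rw [e]; linarith
    rw [gcoef_succ]
    exact mul_pos hf ih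

lemma gcoef_key (α : ℝ) : ∀ k : ℕ,
    gcoef α (k + 1) = -α / ((k:ℝ) + 1) * gcoef (α - 1) k := by
  intro k
  induction k with
  | zero => simp [gcoef]
  | succ n ih =>
    have hn1 : ((n:ℝ) + 1) ≠ 0 := by positivity
    have hn2 : ((n:ℝ) + 1 + 1) ≠ 0 := by positivity
    rw [gcoef_succ, ih, gcoef_succ]
    push_cast
    field_simp
    ring

lemma sum_wcoef (α : ℝ) : ∀ N : ℕ,
    ∑ k ∈ Finset.range (N + 2), wcoef α k
      = α / 2 * gcoef (α - 1) (N + 1) + (2 - α) / 2 * gcoef (α - 1) N := by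
  intro N
  induction N with
  | zero =>
    norm_num [Finset.sum_range_succ, wcoef, gcoef]
    ring
  | succ n ih =>
    have hn1 : ((n:ℝ) + 1) ≠ 0 := by positivity
    have hn2 : ((n:ℝ) + 1 + 1) ≠ 0 := by positivity
    have k1 := gcoef_key α (n + 1)
    have k2 := gcoef_key α n
    push_cast at k1
    rw [show n + 1 + 2 = (n + 2) + 1 by ring, Finset.sum_range_succ, ih,
      wcoef_succ, show n + 2 = (n + 1) + 1 by ring, k1, k2,
      gcoef_succ (α - 1) (n + 1), gcoef_succ (α - 1) n]
    push_cast
    field_simp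
    ring

theorem stmt4 (α : ℝ) (hα0 : 0 < α) (hα1 : α < 1) :
    ∀ N : ℕ, 1 ≤ N → 0 < ∑ k ∈ Finset.range (N + 1), wcoef α k := by
  intro N hN
  obtain ⟨M, rfl⟩ := Nat.exists_eq_add_of_le hN
  rw [show 1 + M + 1 = M + 2 by ring, sum_wcoef]
  have h1 := gcoef_shift_pos α hα1 (M + 1)
  have h2 := gcoef_shift_pos α hα1 M
  have : 0 < (2 - α) / 2 := by linarith
  positivity
end

section
/- Let 0 < α < 1. Then for every integer N ≥ 2, Σ_{k=N}^{2N+2} ω_k^{(α)} < Σ_{k=N}^{2N} g_k^{(α)}. -/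
open Finset

lemma gcoef_neg (α : ℝ) (hα0 : 0 < α) (hα1 : α < 1) : ∀ k : ℕ, gcoef α (k + 1) < 0 := by
  intro k
  induction k with
  | zero =>
    simp only [gcoef]
    push_cast
    nlinarith
  | succ n ih =>
    have h : gcoef α (n + 2) = (1 - (α + 1) / (n + 2)) * gcoef α (n + 1) := by
      rw [show n + 2 = (n + 1) + 1 from rfl, gcoef]
      push_cast
      ring_nf
    rw [h]
    have hpos : (0:ℝ) < 1 - (α + 1) / (n + 2) := by
      have h2 : (α + 1) / (n + 2) < 1 := by
        rw [div_lt_one (by positivity)]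
        have : (2:ℝ) ≤ (n:ℝ) + 2 := by linarith [Nat.cast_nonneg (α := ℝ) n]
        linarith
      linarith
    exact mul_neg_of_pos_of_neg hpos ih

theorem stmt11 (α : ℝ) (hα0 : 0 < α) (hα1 : α < 1) :
    ∀ N : ℕ, 2 ≤ N →
      ∑ k ∈ Finset.Icc N (2 * N + 2), wcoef α k <
        ∑ k ∈ Finset.Icc N (2 * N), gcoef α k := by
  intro N hN
  obtain ⟨m, rfl⟩ : ∃ m, N = m + 2 := ⟨N - 2, by omega⟩
  rw [← Finset.Ico_add_one_right_eq_Icc, ← Finset.Ico_add_one_right_eq_Icc,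
      Finset.sum_Ico_eq_sum_range, Finset.sum_Ico_eq_sum_range]
  rw [show 2 * (m + 2) + 2 + 1 - (m + 2) = m + 5 from by omega,
      show 2 * (m + 2) + 1 - (m + 2) = m + 3 from by omega]
  have hw : ∀ i, wcoef α (m + 2 + i) =
      α / 2 * gcoef α (m + 2 + i) + (2 - α) / 2 * gcoef α (m + 1 + i) := by
    intro i
    rw [show m + 2 + i = (m + 1 + i) + 1 from by omega, wcoef]
  simp only [hw]
  rw [Finset.sum_add_distrib, ← Finset.mul_sum, ← Finset.mul_sum]
  set C := ∑ i ∈ Finset.range (m + 3), gcoef α (m + 2 + i) with hC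
  have hA : ∑ i ∈ Finset.range (m + 5), gcoef α (m + 2 + i)
      = C + gcoef α (2 * m + 5) + gcoef α (2 * m + 6) := by
    rw [Finset.sum_range_succ, Finset.sum_range_succ]
    rw [show m + 2 + (m + 3) = 2 * m + 5 from by omega,
        show m + 2 + (m + 4) = 2 * m + 6 from by omega]
  have hB : ∑ i ∈ Finset.range (m + 5), gcoef α (m + 1 + i)
      = gcoef α (m + 1) + C + gcoef α (2 * m + 5) := by
    rw [Finset.sum_range_succ', Finset.sum_range_succ]
    simp only [show ∀ i, m + 1 + (i + 1) = m + 2 + i from fun i => by omega]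
    rw [show m + 1 + 0 = m + 1 from rfl,
        show m + 2 + (m + 3) = 2 * m + 5 from by omega]
    ring
  rw [hA, hB]
  have h1 : gcoef α (m + 1) < 0 := gcoef_neg α hα0 hα1 m
  have h2 : gcoef α (2 * m + 5) < 0 := by
    have := gcoef_neg α hα0 hα1 (2 * m + 4); convert this using 2
  have h3 : gcoef α (2 * m + 6) < 0 := by
    have := gcoef_neg α hα0 hα1 (2 * m + 5); convert this using 2
  nlinarith [mul_pos hα0 (neg_pos.mpr h2), mul_pos hα0 (neg_pos.mpr h3),
    mul_pos hα0 (neg_pos.mpr h1)]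
end

section
/- Let 0 < α < 1, 1 < β < 2, L > 0, and let d₊, d₋, e₊, e₋ ≥ 0 be real numbers with d₊ + d₋ + e₊ + e₋ > 0. There exists a constant c > 0, independent of N, such that for every integer N ≥ 3, with mesh size h = L/N, and every grid function v one has (δ^{α,β}_h v, v) ≤ −c · ln 2 · ‖v‖², where δ^{α,β}_h v = −d₊ δ^α_{x,+} v − d₋ δ^α_{x,-} v + e₊ δ^β_{x,+} v + e₋ δ^β_{x,-} v. -/
open Finset

/-- Discrete inner product `(u,v) = h ∑_{i=1}^{N-1} u_i v_i`. -/
noncomputable def ip (N : ℕ) (h : ℝ) (u v : ℕ → ℝ) : ℝ :=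
  h * ∑ i ∈ Finset.Icc 1 (N - 1), u i * v i

/-- Discrete `L₂`-norm `‖v‖ = √(v,v)`. -/
noncomputable def gnorm (N : ℕ) (h : ℝ) (v : ℕ → ℝ) : ℝ :=
  Real.sqrt (ip N h v v)

/-- `(δ^γ_{x,+} v)_i = h^{-γ} ∑_{k=0}^{i+1} ω_k^{(γ)} v_{i-k+1}`. -/
noncomputable def dplus (γ : ℝ) (h : ℝ) (v : ℕ → ℝ) (i : ℕ) : ℝ :=
  h ^ (-γ) * ∑ k ∈ Finset.range (i + 2), wcoef γ k * v (i + 1 - k)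

/-- `(δ^γ_{x,-} v)_i = h^{-γ} ∑_{k=0}^{N-i+1} ω_k^{(γ)} v_{i+k-1}`. -/
noncomputable def dminus (γ : ℝ) (N : ℕ) (h : ℝ) (v : ℕ → ℝ) (i : ℕ) : ℝ :=
  h ^ (-γ) * ∑ k ∈ Finset.range (N - i + 2), wcoef γ k * v (i + k - 1)

/-- `δ^{α,β}_h v = -d₊ δ^α_{x,+} v - d₋ δ^α_{x,-} v + e₊ δ^β_{x,+} v + e₋ δ^β_{x,-} v`. -/
noncomputable def dop (α β : ℝ) (N : ℕ) (h : ℝ) (dp dm ep em : ℝ) (v : ℕ → ℝ) (i : ℕ) : ℝ :=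
  - dp * dplus α h v i - dm * dminus α N h v i + ep * dplus β h v i + em * dminus β N h v i

noncomputable def prodP (γ : ℝ) (n : ℕ) : ℝ := ∏ j ∈ Finset.range n, (1 - γ/(j+1))

lemma prodP_succ (γ : ℝ) (n : ℕ) : prodP γ (n+1) = prodP γ n * (1 - γ/(n+1)) := by
  simp [prodP, Finset.prod_range_succ]

lemma gq (γ : ℝ) : ∀ n : ℕ, gcoef γ (n+1) = -(γ/(n+1)) * prodP γ n := by
  intro n
  induction n with
  | zero => simp [gcoef, prodP]
  | succ n ih =>
    rw [gcoef, ih, prodP_succ]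
    have h1 : ((n:ℝ)+1) ≠ 0 := by positivity
    have h2 : ((n:ℝ)+1+1) ≠ 0 := by positivity
    push_cast
    field_simp
    ring

lemma gsum (γ : ℝ) : ∀ n : ℕ, ∑ k ∈ Finset.range (n+1), gcoef γ k = prodP γ n := by
  intro n
  induction n with
  | zero => simp [gcoef, prodP]
  | succ n ih =>
    rw [Finset.sum_range_succ, ih, gq, prodP_succ]
    push_cast
    ring

lemma wsum (γ : ℝ) (l : ℕ) :
    ∑ k ∈ Finset.range (l+2), wcoef γ k
      = γ/2 * prodP γ (l+1) + (2-γ)/2 * prodP γ l := by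
  have h : ∀ m : ℕ, ∑ k ∈ Finset.range (m+1), wcoef γ k
      = γ/2 * (∑ k ∈ Finset.range (m+1), gcoef γ k)
        + (2-γ)/2 * (∑ k ∈ Finset.range m, gcoef γ k) := by
    intro m
    induction m with
    | zero => simp [wcoef]
    | succ m ih =>
      rw [Finset.sum_range_succ, ih]
      rw [Finset.sum_range_succ (f := gcoef γ) (n := m+1),
        Finset.sum_range_succ (f := gcoef γ) (n := m)]
      show _ + (γ / 2 * gcoef γ (m + 1) + (2 - γ) / 2 * gcoef γ m) = _
      ring
  rw [h (l+1), gsum, gsum]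

lemma gcoef_one (γ : ℝ) : gcoef γ 1 = -γ := by
  rw [gcoef]; push_cast; rw [gcoef]; ring

lemma gcoef_two (γ : ℝ) : gcoef γ 2 = γ * (γ - 1) / 2 := by
  rw [gcoef, gcoef_one]; push_cast; ring

lemma gcoef_nonpos {γ : ℝ} (hγ0 : 0 < γ) (hγ1 : γ < 1) : ∀ k : ℕ, gcoef γ (k+1) ≤ 0 := by
  intro k
  induction k with
  | zero => rw [gcoef_one]; linarith
  | succ k ih =>
    rw [gcoef]
    have hfac : 0 ≤ 1 - (γ + 1) / ((k:ℝ) + 1 + 1) := by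
      rw [sub_nonneg, div_le_one (by positivity)]
      have : (0:ℝ) ≤ (k:ℝ) := by positivity
      linarith
    push_cast
    exact mul_nonpos_of_nonneg_of_nonpos hfac ih

lemma gcoef_nonneg' {γ : ℝ} (hγ1 : 1 < γ) (hγ2 : γ < 2) : ∀ k : ℕ, 0 ≤ gcoef γ (k+2) := by
  intro k
  induction k with
  | zero => rw [gcoef_two]; nlinarith
  | succ k ih =>
    rw [gcoef]
    have hfac : 0 ≤ 1 - (γ + 1) / ((k:ℝ) + 2 + 1) := by
      rw [sub_nonneg, div_le_one (by positivity)]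
      have : (0:ℝ) ≤ (k:ℝ) := by positivity
      linarith
    push_cast
    exact mul_nonneg hfac ih

lemma wcoef_nonpos {γ : ℝ} (hγ0 : 0 < γ) (hγ1 : γ < 1) (k : ℕ) : wcoef γ (k+2) ≤ 0 := by
  rw [wcoef]
  have h1 := gcoef_nonpos hγ0 hγ1 (k+1)
  have h2 := gcoef_nonpos hγ0 hγ1 k
  have : γ / 2 * gcoef γ (k + 1 + 1) ≤ 0 := mul_nonpos_of_nonneg_of_nonpos (by linarith) h1
  have : (2 - γ) / 2 * gcoef γ (k + 1) ≤ 0 := mul_nonpos_of_nonneg_of_nonpos (by linarith) h2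
  linarith

lemma wcoef_nonneg {γ : ℝ} (hγ1 : 1 < γ) (hγ2 : γ < 2) (k : ℕ) : 0 ≤ wcoef γ (k+3) := by
  rw [wcoef]
  have h1 := gcoef_nonneg' hγ1 hγ2 (k+1)
  have h2 := gcoef_nonneg' hγ1 hγ2 k
  have e1 : γ / 2 * gcoef γ (k + 2 + 1) ≥ 0 := by
    have : gcoef γ (k+2+1) = gcoef γ (k+1+2) := by norm_num
    rw [this]; exact mul_nonneg (by linarith) h1
  have e2 : (2 - γ) / 2 * gcoef γ (k + 2) ≥ 0 := mul_nonneg (by linarith) h2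
  linarith

lemma w02 (γ : ℝ) : wcoef γ 0 + wcoef γ 2 = γ * (γ + 2) * (γ - 1) / 4 := by
  show γ / 2 * gcoef γ 0 + (γ / 2 * gcoef γ (1 + 1) + (2 - γ) / 2 * gcoef γ 1) = _
  rw [gcoef_one]
  rw [show gcoef γ (1+1) = gcoef γ 2 from rfl, gcoef_two]
  show γ / 2 * 1 + _ = _
  ring

lemma prodP_nonneg {γ : ℝ} (hγ0 : 0 < γ) (hγ1 : γ < 1) (n : ℕ) : 0 ≤ prodP γ n := by
  apply Finset.prod_nonneg
  intro j _
  have h1 : γ / ((j:ℝ)+1) ≤ γ := by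
    rw [div_le_iff₀ (by positivity)]
    nlinarith [Nat.cast_nonneg (α := ℝ) j]
  linarith

lemma prodP_ge {γ : ℝ} (hγ0 : 0 < γ) (hγ1 : γ < 1) :
    ∀ n : ℕ, 1 ≤ n → (1-γ) * (n:ℝ) ^ (-γ) ≤ prodP γ n := by
  intro n hn
  induction n with
  | zero => omega
  | succ n ih =>
    rcases Nat.eq_or_lt_of_le hn with h | h
    · have : n = 0 := by omega
      subst this
      simp [prodP, Real.one_rpow]
    · have hn1 : 1 ≤ n := by omega
      have ihn := ih hn1
      rw [prodP_succ]
      have hnpos : (0:ℝ) < (n:ℝ) := by exact_mod_cast hn1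
      have hn1pos : (0:ℝ) < (n:ℝ) + 1 := by linarith
      -- Bernoulli : ((n/(n+1)))^γ ≤ 1 - γ/(n+1)
      have hbern : ((n:ℝ)/((n:ℝ)+1)) ^ γ ≤ 1 - γ/((n:ℝ)+1) := by
        have hs : (-1:ℝ) ≤ -(1/((n:ℝ)+1)) := by
          rw [neg_le_neg_iff]
          rw [div_le_one hn1pos]; linarith
        have := rpow_one_add_le_one_add_mul_self (s := -(1/((n:ℝ)+1)))
          (p := γ) hs (le_of_lt hγ0) (le_of_lt hγ1)
        have he : (1:ℝ) + -(1/((n:ℝ)+1)) = (n:ℝ)/((n:ℝ)+1) := by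
          field_simp
          ring
        rw [he] at this
        calc ((n:ℝ)/((n:ℝ)+1)) ^ γ ≤ 1 + γ * -(1/((n:ℝ)+1)) := this
          _ = 1 - γ/((n:ℝ)+1) := by ring
      have hfac : (0:ℝ) ≤ 1 - γ/((n:ℝ)+1) := by
        have : γ/((n:ℝ)+1) ≤ γ := by
          rw [div_le_iff₀ hn1pos]; nlinarith
        linarith
      have key : (1-γ) * ((n:ℝ)+1) ^ (-γ) ≤ ((1-γ) * (n:ℝ)^(-γ)) * (1 - γ/((n:ℝ)+1)) := by
        have e1 : ((n:ℝ)+1) ^ (-γ) = (n:ℝ)^(-γ) * (((n:ℝ)/((n:ℝ)+1)) ^ γ) := by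
          rw [Real.div_rpow (le_of_lt hnpos) (le_of_lt hn1pos)]
          rw [Real.rpow_neg (le_of_lt hnpos), Real.rpow_neg (by linarith)]
          field_simp
        rw [e1]
        have h2 : (0:ℝ) ≤ (1-γ) * (n:ℝ)^(-γ) := by
          apply mul_nonneg (by linarith)
          exact le_of_lt (Real.rpow_pos_of_pos hnpos _)
        calc (1-γ) * ((n:ℝ)^(-γ) * (((n:ℝ)/((n:ℝ)+1)) ^ γ))
            = ((1-γ) * (n:ℝ)^(-γ)) * (((n:ℝ)/((n:ℝ)+1)) ^ γ) := by ring
          _ ≤ ((1-γ) * (n:ℝ)^(-γ)) * (1 - γ/((n:ℝ)+1)) := by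
              exact mul_le_mul_of_nonneg_left hbern h2
      have hcast : (((n+1 : ℕ)):ℝ) = (n:ℝ)+1 := by push_cast; ring
      rw [hcast]
      calc (1-γ) * ((n:ℝ)+1) ^ (-γ)
          ≤ ((1-γ) * (n:ℝ)^(-γ)) * (1 - γ/((n:ℝ)+1)) := key
        _ ≤ prodP γ n * (1 - γ/((n:ℝ)+1)) := mul_le_mul_of_nonneg_right ihn hfac

lemma prodP_beta_rel (β : ℝ) : ∀ n : ℕ, prodP β (n+1) = ((1-β)/(n+1)) * prodP (β-1) n := by
  intro n
  induction n with
  | zero => simp [prodP]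
  | succ n ih =>
    rw [prodP_succ, ih, prodP_succ]
    have h1 : ((n:ℝ)+1) ≠ 0 := by positivity
    have h2 : ((n:ℝ)+1+1) ≠ 0 := by positivity
    push_cast
    field_simp
    ring

lemma prodP_beta_nonpos {β : ℝ} (hβ1 : 1 < β) (hβ2 : β < 2) (n : ℕ) :
    prodP β (n+1) ≤ 0 := by
  rw [prodP_beta_rel]
  apply mul_nonpos_of_nonpos_of_nonneg
  · apply div_nonpos_of_nonpos_of_nonneg (by linarith) (by positivity)
  · exact prodP_nonneg (by linarith) (by linarith) n

lemma prodP_beta_le {β : ℝ} (hβ1 : 1 < β) (hβ2 : β < 2) :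
    ∀ n : ℕ, 2 ≤ n → prodP β n ≤ -((β-1)*(2-β)) * (n:ℝ) ^ (-β) := by
  intro n hn
  obtain ⟨m, rfl⟩ : ∃ m, n = m + 1 := ⟨n-1, by omega⟩
  have hm : 1 ≤ m := by omega
  have hmpos : (0:ℝ) < (m:ℝ) := by exact_mod_cast hm
  have hm1pos : (0:ℝ) < (m:ℝ)+1 := by linarith
  rw [prodP_beta_rel]
  have hP : (2-β) * (m:ℝ) ^ (-(β-1)) ≤ prodP (β-1) m := by
    have := prodP_ge (γ := β - 1) (by linarith) (by linarith) m hm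
    calc (2-β) * (m:ℝ) ^ (-(β-1)) = (1-(β-1)) * (m:ℝ) ^ (-(β-1)) := by ring
      _ ≤ prodP (β-1) m := this
  have hP2 : (2-β) * ((m:ℝ)+1) ^ (-(β-1)) ≤ prodP (β-1) m := by
    refine le_trans ?_ hP
    apply mul_le_mul_of_nonneg_left _ (by linarith)
    exact Real.rpow_le_rpow_of_nonpos hmpos (by linarith) (by linarith)
  have hneg : (1-β)/((m:ℝ)+1) ≤ 0 :=
    div_nonpos_of_nonpos_of_nonneg (by linarith) (by linarith)
  have step : ((1-β)/((m:ℝ)+1)) * prodP (β-1) m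
      ≤ ((1-β)/((m:ℝ)+1)) * ((2-β) * ((m:ℝ)+1) ^ (-(β-1))) :=
    mul_le_mul_of_nonpos_left hP2 hneg
  refine le_trans step (le_of_eq ?_)
  have e1 : ((m:ℝ)+1) ^ (-β) = ((m:ℝ)+1) ^ (-(1:ℝ)) * ((m:ℝ)+1) ^ (-(β-1)) := by
    rw [← Real.rpow_add hm1pos]; congr 1; ring
  have e2 : ((m:ℝ)+1) ^ (-(1:ℝ)) = (((m:ℝ)+1))⁻¹ := by
    rw [Real.rpow_neg (by linarith), Real.rpow_one]
  have hcast : (((m+1 : ℕ)):ℝ) = (m:ℝ)+1 := by push_cast; ring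
  rw [hcast, e1, e2]
  field_simp
  ring

-- Sums of wcoef: lower bound for 0<γ<1
lemma wsum_alpha_ge {γ : ℝ} (hγ0 : 0 < γ) (hγ1 : γ < 1) (N : ℕ) (hN : 3 ≤ N) :
    (γ*(1-γ)/2) * (N:ℝ) ^ (-γ) ≤ ∑ k ∈ Finset.range (N+1), wcoef γ k := by
  obtain ⟨l, rfl⟩ : ∃ l, N = l + 2 := ⟨N-2, by omega⟩
  rw [wsum]
  have h1 : (1-γ) * ((l+2:ℕ):ℝ) ^ (-γ) ≤ prodP γ (l+1+1) := by
    have := prodP_ge hγ0 hγ1 (l+2) (by omega)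
    convert this using 4 <;> push_cast <;> ring
  have h2 : 0 ≤ prodP γ (l+1) := prodP_nonneg hγ0 hγ1 (l+1)
  have h4 : γ/2 * ((1-γ) * ((l+2:ℕ):ℝ) ^ (-γ)) ≤ γ/2 * prodP γ (l+1+1) :=
    mul_le_mul_of_nonneg_left h1 (by linarith)
  have h5 : 0 ≤ (2-γ)/2 * prodP γ (l+1) := mul_nonneg (by linarith) h2
  calc (γ*(1-γ)/2) * ((l+2:ℕ):ℝ) ^ (-γ) = γ/2 * ((1-γ) * ((l+2:ℕ):ℝ) ^ (-γ)) := by ring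
    _ ≤ γ/2 * prodP γ (l+1+1) := h4
    _ ≤ γ/2 * prodP γ (l+1+1) + (2-γ)/2 * prodP γ (l+1) := by linarith

-- upper bound for 1<γ<2
lemma wsum_beta_le {β : ℝ} (hβ1 : 1 < β) (hβ2 : β < 2) (N : ℕ) (hN : 3 ≤ N) :
    ∑ k ∈ Finset.range (N+1), wcoef β k ≤ -((β-1)*(2-β)^2/2) * (N:ℝ) ^ (-β) := by
  obtain ⟨l, rfl⟩ : ∃ l, N = l + 2 := ⟨N-2, by omega⟩
  rw [wsum]
  have hβ0 : (0:ℝ) < β := by linarith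
  have h1 : β/2 * prodP β (l+1+1) ≤ 0 := by
    have := prodP_beta_nonpos hβ1 hβ2 (l+1)
    exact mul_nonpos_of_nonneg_of_nonpos (by linarith) this
  have h2 : prodP β (l+1) ≤ -((β-1)*(2-β)) * ((l+1:ℕ):ℝ) ^ (-β) := by
    have := prodP_beta_le hβ1 hβ2 (l+1) (by omega)
    convert this using 4
  have h3 : (2-β)/2 * prodP β (l+1) ≤ (2-β)/2 * (-((β-1)*(2-β)) * ((l+1:ℕ):ℝ) ^ (-β)) :=
    mul_le_mul_of_nonneg_left h2 (by linarith)
  have h4 : ((l+2:ℕ):ℝ) ^ (-β) ≤ ((l+1:ℕ):ℝ) ^ (-β) := by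
    apply Real.rpow_le_rpow_of_nonpos (by positivity) (by push_cast; linarith) (by linarith)
  have h5 : (2-β)/2 * (-((β-1)*(2-β)) * ((l+1:ℕ):ℝ) ^ (-β))
      ≤ -((β-1)*(2-β)^2/2) * ((l+2:ℕ):ℝ) ^ (-β) := by
    have hc : (0:ℝ) ≤ (β-1)*(2-β)^2/2 := by nlinarith
    calc (2-β)/2 * (-((β-1)*(2-β)) * ((l+1:ℕ):ℝ) ^ (-β))
        = -((β-1)*(2-β)^2/2) * ((l+1:ℕ):ℝ) ^ (-β) := by ring
      _ ≤ -((β-1)*(2-β)^2/2) * ((l+2:ℕ):ℝ) ^ (-β) := by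
          rw [neg_mul, neg_mul, neg_le_neg_iff]
          exact mul_le_mul_of_nonneg_left h4 hc
  linarith

lemma key_split (γ : ℝ) (N : ℕ) (hN : 3 ≤ N) (f : ℕ → ℝ) :
    ∑ k ∈ Finset.range (N+1), f k
      = (f 0 + f 1 + f 2) + ∑ k ∈ Finset.Ico 3 (N+1), f k := by
  rw [Finset.range_eq_Ico, ← Finset.sum_Ico_consecutive f (by omega : 0 ≤ 3) (by omega : 3 ≤ N+1)]
  congr 1
  rw [← Finset.range_eq_Ico]
  simp [Finset.sum_range_succ]

lemma key_low {γ E : ℝ} (hγ0 : 0 < γ) (hγ1 : γ < 1) {N : ℕ} (hN : 3 ≤ N)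
    (φ : ℕ → ℝ) (hφ1 : φ 1 = E) (h02 : φ 0 = φ 2) (hle : ∀ k, φ k ≤ E) :
    (∑ k ∈ Finset.range (N+1), wcoef γ k) * E ≤ ∑ k ∈ Finset.range (N+1), wcoef γ k * φ k := by
  have main : 0 ≤ ∑ k ∈ Finset.range (N+1), wcoef γ k * (φ k - E) := by
    rw [key_split γ N hN]
    have hA : 0 ≤ wcoef γ 0 * (φ 0 - E) + wcoef γ 1 * (φ 1 - E) + wcoef γ 2 * (φ 2 - E) := by
      rw [hφ1, ← h02]
      have : wcoef γ 0 * (φ 0 - E) + wcoef γ 1 * (E - E) + wcoef γ 2 * (φ 0 - E)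
          = (wcoef γ 0 + wcoef γ 2) * (φ 0 - E) := by ring
      rw [this, w02]
      have hw : γ * (γ + 2) * (γ - 1) / 4 ≤ 0 := by
        have := mul_nonpos_of_nonneg_of_nonpos
          (le_of_lt (mul_pos hγ0 (show (0:ℝ) < γ+2 by linarith)))
          (show γ-1 ≤ 0 by linarith)
        linarith
      nlinarith [hle 0]
    have hB : 0 ≤ ∑ k ∈ Finset.Ico 3 (N+1), wcoef γ k * (φ k - E) := by
      apply Finset.sum_nonneg
      intro k hk
      obtain ⟨j, rfl⟩ : ∃ j, k = j + 2 := ⟨k - 2, by simp at hk; omega⟩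
      nlinarith [wcoef_nonpos hγ0 hγ1 j, hle (j+2)]
    linarith
  have expand : ∑ k ∈ Finset.range (N+1), wcoef γ k * (φ k - E)
      = ∑ k ∈ Finset.range (N+1), wcoef γ k * φ k
        - (∑ k ∈ Finset.range (N+1), wcoef γ k) * E := by
    rw [Finset.sum_mul, ← Finset.sum_sub_distrib]
    congr 1; ext k; ring
  linarith [expand ▸ main]

lemma key_high {β E : ℝ} (hβ1 : 1 < β) (hβ2 : β < 2) {N : ℕ} (hN : 3 ≤ N)
    (φ : ℕ → ℝ) (hφ1 : φ 1 = E) (h02 : φ 0 = φ 2) (hle : ∀ k, φ k ≤ E) :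
    ∑ k ∈ Finset.range (N+1), wcoef β k * φ k ≤ (∑ k ∈ Finset.range (N+1), wcoef β k) * E := by
  have main : ∑ k ∈ Finset.range (N+1), wcoef β k * (φ k - E) ≤ 0 := by
    rw [key_split β N hN]
    have hA : wcoef β 0 * (φ 0 - E) + wcoef β 1 * (φ 1 - E) + wcoef β 2 * (φ 2 - E) ≤ 0 := by
      rw [hφ1, ← h02]
      have : wcoef β 0 * (φ 0 - E) + wcoef β 1 * (E - E) + wcoef β 2 * (φ 0 - E)
          = (wcoef β 0 + wcoef β 2) * (φ 0 - E) := by ring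
      rw [this, w02]
      have hw : 0 ≤ β * (β + 2) * (β - 1) / 4 := by nlinarith [mul_pos (show (0:ℝ) < β*(β+2) by nlinarith) (show (0:ℝ) < β-1 by linarith)]
      nlinarith [hle 0]
    have hB : ∑ k ∈ Finset.Ico 3 (N+1), wcoef β k * (φ k - E) ≤ 0 := by
      apply Finset.sum_nonpos
      intro k hk
      obtain ⟨j, rfl⟩ : ∃ j, k = j + 3 := ⟨k - 3, by simp at hk; omega⟩
      exact mul_nonpos_of_nonneg_of_nonpos (wcoef_nonneg hβ1 hβ2 j) (by linarith [hle (j+3)])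
    linarith
  have expand : ∑ k ∈ Finset.range (N+1), wcoef β k * (φ k - E)
      = ∑ k ∈ Finset.range (N+1), wcoef β k * φ k
        - (∑ k ∈ Finset.range (N+1), wcoef β k) * E := by
    rw [Finset.sum_mul, ← Finset.sum_sub_distrib]
    congr 1; ext k; ring
  linarith [expand ▸ main]

section grid
variable (N : ℕ) (v : ℕ → ℝ)

/-- zero-extension of the grid function to `ℤ`. -/
noncomputable def wz (j : ℤ) : ℝ := if 0 ≤ j ∧ j ≤ (N:ℤ) then v j.toNat else 0

lemma wz_natcast (i : ℕ) (hi : i ≤ N) : wz N v i = v i := by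
  rw [wz, if_pos ⟨Int.ofNat_nonneg i, by exact_mod_cast hi⟩, Int.toNat_natCast]

variable (hv0 : v 0 = 0) (hvN : v N = 0)
include hv0 hvN

lemma wz_zero {j : ℤ} (hj : j ∉ Finset.Icc (1:ℤ) ((N:ℤ)-1)) : wz N v j = 0 := by
  simp only [Finset.mem_Icc, not_and_or, not_le] at hj
  rcases hj with hj | hj
  · -- j < 1
    rcases lt_or_ge j 0 with h | h
    · rw [wz, if_neg]; push_neg; intro h'; omega
    · have : j = 0 := by omega
      subst this
      rw [wz, if_pos ⟨le_refl _, by positivity⟩]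
      simpa using hv0
  · -- j > N - 1
    rcases le_or_gt j (N:ℤ) with h | h
    · have : j = (N:ℤ) := by omega
      subst this
      rw [wz, if_pos ⟨by positivity, le_refl _⟩]
      simpa using hvN
    · rw [wz, if_neg]; push_neg; intro h'; omega

lemma sum_sq_le (S : Finset ℤ) :
    ∑ j ∈ S, (wz N v j)^2 ≤ ∑ j ∈ Finset.Icc (1:ℤ) ((N:ℤ)-1), (wz N v j)^2 := by
  classical
  set T := Finset.Icc (1:ℤ) ((N:ℤ)-1)
  have h1 : ∑ j ∈ S, (wz N v j)^2 = ∑ j ∈ S ∩ T, (wz N v j)^2 := by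
    apply (Finset.sum_subset (Finset.inter_subset_left)  ?_).symm
    intro j hjS hjT
    have : j ∉ T := fun hT => hjT (Finset.mem_inter.2 ⟨hjS, hT⟩)
    rw [wz_zero N v hv0 hvN this]
    ring
  rw [h1]
  apply Finset.sum_le_sum_of_subset_of_nonneg Finset.inter_subset_right
  intro j _ _
  positivity

lemma cz_le (d : ℤ) :
    ∑ i ∈ Finset.Icc (1:ℤ) ((N:ℤ)-1), wz N v (i+d) * wz N v i
      ≤ ∑ i ∈ Finset.Icc (1:ℤ) ((N:ℤ)-1), (wz N v i)^2 := by
  classical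
  set T := Finset.Icc (1:ℤ) ((N:ℤ)-1)
  have h1 : ∀ i ∈ T, wz N v (i+d) * wz N v i ≤ ((wz N v (i+d))^2 + (wz N v i)^2)/2 := by
    intro i _
    nlinarith [sq_nonneg (wz N v (i+d) - wz N v i)]
  have h2 : ∑ i ∈ T, wz N v (i+d) * wz N v i
      ≤ ∑ i ∈ T, ((wz N v (i+d))^2 + (wz N v i)^2)/2 := Finset.sum_le_sum h1
  have h3 : ∑ i ∈ T, (wz N v (i+d))^2 ≤ ∑ i ∈ T, (wz N v i)^2 := by
    have e : ∑ i ∈ T, (wz N v (i+d))^2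
        = ∑ j ∈ T.map (addRightEmbedding d), (wz N v j)^2 := by
      rw [Finset.sum_map]
      rfl
    rw [e]
    exact sum_sq_le N v hv0 hvN _
  have h4 : ∑ i ∈ T, ((wz N v (i+d))^2 + (wz N v i)^2)/2
      = ((∑ i ∈ T, (wz N v (i+d))^2) + ∑ i ∈ T, (wz N v i)^2)/2 := by
    rw [← Finset.sum_add_distrib, ← Finset.sum_div]
  linarith

lemma cz_symm (hN : 3 ≤ N) :
    ∑ i ∈ Finset.Icc (1:ℤ) ((N:ℤ)-1), wz N v (i+(-1)) * wz N v i
      = ∑ i ∈ Finset.Icc (1:ℤ) ((N:ℤ)-1), wz N v (i+1) * wz N v i := by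
  classical
  have hN' : (3:ℤ) ≤ (N:ℤ) := by exact_mod_cast hN
  have key : ∀ (g : ℤ → ℝ), g ((N:ℤ)-1) = 0 → g 0 = 0 →
      ∑ j ∈ Finset.Icc (0:ℤ) ((N:ℤ)-2), g j = ∑ j ∈ Finset.Icc (1:ℤ) ((N:ℤ)-1), g j := by
    intro g htop hbot
    have e1 : Finset.Icc (0:ℤ) ((N:ℤ)-1) = insert ((N:ℤ)-1) (Finset.Icc (0:ℤ) ((N:ℤ)-2)) := by
      ext x; simp only [Finset.mem_Icc, Finset.mem_insert]; omega
    have e2 : Finset.Icc (0:ℤ) ((N:ℤ)-1) = insert (0:ℤ) (Finset.Icc (1:ℤ) ((N:ℤ)-1)) := by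
      ext x; simp only [Finset.mem_Icc, Finset.mem_insert]; omega
    have h1 : ((N:ℤ)-1) ∉ Finset.Icc (0:ℤ) ((N:ℤ)-2) := by simp; omega
    have h2 : (0:ℤ) ∉ Finset.Icc (1:ℤ) ((N:ℤ)-1) := by simp
    have eq1 : ∑ j ∈ Finset.Icc (0:ℤ) ((N:ℤ)-1), g j
        = g ((N:ℤ)-1) + ∑ j ∈ Finset.Icc (0:ℤ) ((N:ℤ)-2), g j := by
      rw [e1, Finset.sum_insert h1]
    have eq2 : ∑ j ∈ Finset.Icc (0:ℤ) ((N:ℤ)-1), g j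
        = g 0 + ∑ j ∈ Finset.Icc (1:ℤ) ((N:ℤ)-1), g j := by
      rw [e2, Finset.sum_insert h2]
    rw [htop] at eq1
    rw [hbot] at eq2
    linarith
  -- LHS reindex : i = j+1
  have lhs : ∑ i ∈ Finset.Icc (1:ℤ) ((N:ℤ)-1), wz N v (i+(-1)) * wz N v i
      = ∑ j ∈ Finset.Icc (0:ℤ) ((N:ℤ)-2), wz N v j * wz N v (j+1) := by
    have : Finset.Icc (1:ℤ) ((N:ℤ)-1) = (Finset.Icc (0:ℤ) ((N:ℤ)-2)).map (addRightEmbedding 1) := by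
      rw [Finset.map_add_right_Icc]; congr 1 <;> ring
    rw [this, Finset.sum_map]
    apply Finset.sum_congr rfl
    intro j _
    simp only [addRightEmbedding_apply]
    have : j + 1 + (-1) = j := by ring
    rw [this]
  rw [lhs]
  rw [key (fun j => wz N v j * wz N v (j+1)) ?htop ?hbot]
  · apply Finset.sum_congr rfl
    intro i _
    ring
  case htop =>
    have : ((N:ℤ)-1) + 1 = (N:ℤ) := by ring
    simp only [this]
    have hz : wz N v (N:ℤ) = 0 := by
      rw [wz_natcast N v N (le_refl _)]; exact hvN
    rw [hz]; ring
  case hbot =>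
    have hz : wz N v 0 = 0 := by
      have := wz_natcast N v 0 (by omega)
      simpa [hv0] using this
    simp only [hz]
    ring

end grid

section oplemmas
variable (N : ℕ) (v : ℕ → ℝ)

lemma natIcc_to_intIcc (hN : 1 ≤ N) (f : ℤ → ℝ) :
    ∑ i ∈ Finset.Icc 1 (N-1), f (i:ℤ) = ∑ i ∈ Finset.Icc (1:ℤ) ((N:ℤ)-1), f i := by
  apply Finset.sum_nbij' (i := fun a : ℕ => (a:ℤ)) (j := fun b : ℤ => b.toNat)
  · intro a ha
    simp only [Finset.mem_Icc] at ha ⊢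
    omega
  · intro b hb
    simp only [Finset.mem_Icc] at hb ⊢
    omega
  · intro a _; simp
  · intro b hb
    simp only [Finset.mem_Icc] at hb
    omega
  · intro a _; rfl

lemma dplus_eq (γ hh : ℝ) (i : ℕ) (hN : 3 ≤ N) (hi1 : 1 ≤ i) (hi2 : i ≤ N-1) :
    dplus γ hh v i = hh^(-γ) * ∑ k ∈ Finset.range (N+1), wcoef γ k * wz N v ((i:ℤ)+1-(k:ℤ)) := by
  rw [dplus]
  congr 1
  have step1 : ∀ k ∈ Finset.range (i+2), wcoef γ k * v (i + 1 - k)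
      = wcoef γ k * wz N v ((i:ℤ)+1-(k:ℤ)) := by
    intro k hk
    simp only [Finset.mem_range] at hk
    have hk' : k ≤ i + 1 := by omega
    have hle : i + 1 - k ≤ N := by omega
    have hcast : ((i + 1 - k : ℕ) : ℤ) = (i:ℤ)+1-(k:ℤ) := by omega
    rw [← hcast, wz_natcast N v _ hle]
  rw [Finset.sum_congr rfl step1]
  apply Finset.sum_subset
  · intro k hk
    simp only [Finset.mem_range] at hk ⊢
    omega
  · intro k hk hk'
    simp only [Finset.mem_range] at hk hk'
    have : (i:ℤ)+1-(k:ℤ) < 0 := by omega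
    rw [wz, if_neg (by omega)]
    ring

lemma dminus_eq (γ hh : ℝ) (i : ℕ) (hN : 3 ≤ N) (hi1 : 1 ≤ i) (hi2 : i ≤ N-1) :
    dminus γ N hh v i = hh^(-γ) * ∑ k ∈ Finset.range (N+1), wcoef γ k * wz N v ((i:ℤ)+(k:ℤ)-1) := by
  rw [dminus]
  congr 1
  have step1 : ∀ k ∈ Finset.range (N-i+2), wcoef γ k * v (i + k - 1)
      = wcoef γ k * wz N v ((i:ℤ)+(k:ℤ)-1) := by
    intro k hk
    simp only [Finset.mem_range] at hk
    have hle : i + k - 1 ≤ N := by omega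
    have hcast : ((i + k - 1 : ℕ) : ℤ) = (i:ℤ)+(k:ℤ)-1 := by omega
    rw [← hcast, wz_natcast N v _ hle]
  rw [Finset.sum_congr rfl step1]
  apply Finset.sum_subset
  · intro k hk
    simp only [Finset.mem_range] at hk ⊢
    omega
  · intro k hk hk'
    simp only [Finset.mem_range] at hk hk'
    have : (N:ℤ) < (i:ℤ)+(k:ℤ)-1 := by omega
    rw [wz, if_neg (by omega)]
    ring

end oplemmas

section opsum
variable (N : ℕ) (v : ℕ → ℝ) (hN : 3 ≤ N) (hv0 : v 0 = 0) (hvN : v N = 0)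
include hN

lemma opsum_plus (γ hh : ℝ) :
    ∑ i ∈ Finset.Icc 1 (N-1), dplus γ hh v i * v i
      = hh^(-γ) * ∑ k ∈ Finset.range (N+1), wcoef γ k *
          (∑ i ∈ Finset.Icc (1:ℤ) ((N:ℤ)-1), wz N v (i+(1-(k:ℤ))) * wz N v i) := by
  have step1 : ∀ i ∈ Finset.Icc 1 (N-1), dplus γ hh v i * v i
      = hh^(-γ) * ((∑ k ∈ Finset.range (N+1), wcoef γ k * wz N v ((i:ℤ)+1-(k:ℤ))) * wz N v (i:ℤ)) := by
    intro i hi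
    simp only [Finset.mem_Icc] at hi
    rw [dplus_eq N v γ hh i hN hi.1 hi.2, wz_natcast N v i (by omega)]
    ring
  rw [Finset.sum_congr rfl step1, ← Finset.mul_sum]
  congr 1
  have step2 : ∀ i ∈ Finset.Icc 1 (N-1),
      (∑ k ∈ Finset.range (N+1), wcoef γ k * wz N v ((i:ℤ)+1-(k:ℤ))) * wz N v (i:ℤ)
      = ∑ k ∈ Finset.range (N+1), wcoef γ k * (wz N v ((i:ℤ)+(1-(k:ℤ))) * wz N v (i:ℤ)) := by
    intro i _
    rw [Finset.sum_mul]
    apply Finset.sum_congr rfl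
    intro k _
    have : (i:ℤ)+1-(k:ℤ) = (i:ℤ)+(1-(k:ℤ)) := by ring
    rw [this]; ring
  rw [Finset.sum_congr rfl step2, Finset.sum_comm]
  apply Finset.sum_congr rfl
  intro k _
  rw [← Finset.mul_sum]
  congr 1
  exact natIcc_to_intIcc N (by omega) (fun j => wz N v (j+(1-(k:ℤ))) * wz N v j)

lemma opsum_minus (γ hh : ℝ) :
    ∑ i ∈ Finset.Icc 1 (N-1), dminus γ N hh v i * v i
      = hh^(-γ) * ∑ k ∈ Finset.range (N+1), wcoef γ k *
          (∑ i ∈ Finset.Icc (1:ℤ) ((N:ℤ)-1), wz N v (i+((k:ℤ)-1)) * wz N v i) := by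
  have step1 : ∀ i ∈ Finset.Icc 1 (N-1), dminus γ N hh v i * v i
      = hh^(-γ) * ((∑ k ∈ Finset.range (N+1), wcoef γ k * wz N v ((i:ℤ)+(k:ℤ)-1)) * wz N v (i:ℤ)) := by
    intro i hi
    simp only [Finset.mem_Icc] at hi
    rw [dminus_eq N v γ hh i hN hi.1 hi.2, wz_natcast N v i (by omega)]
    ring
  rw [Finset.sum_congr rfl step1, ← Finset.mul_sum]
  congr 1
  have step2 : ∀ i ∈ Finset.Icc 1 (N-1),
      (∑ k ∈ Finset.range (N+1), wcoef γ k * wz N v ((i:ℤ)+(k:ℤ)-1)) * wz N v (i:ℤ)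
      = ∑ k ∈ Finset.range (N+1), wcoef γ k * (wz N v ((i:ℤ)+((k:ℤ)-1)) * wz N v (i:ℤ)) := by
    intro i _
    rw [Finset.sum_mul]
    apply Finset.sum_congr rfl
    intro k _
    have : (i:ℤ)+(k:ℤ)-1 = (i:ℤ)+((k:ℤ)-1) := by ring
    rw [this]; ring
  rw [Finset.sum_congr rfl step2, Finset.sum_comm]
  apply Finset.sum_congr rfl
  intro k _
  rw [← Finset.mul_sum]
  congr 1
  exact natIcc_to_intIcc N (by omega) (fun j => wz N v (j+((k:ℤ)-1)) * wz N v j)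

end opsum


set_option maxHeartbeats 1000000 in
theorem stmt15 (α β L dp dm ep em : ℝ)
    (hα0 : 0 < α) (hα1 : α < 1) (hβ1 : 1 < β) (hβ2 : β < 2) (hL : 0 < L)
    (hdp : 0 ≤ dp) (hdm : 0 ≤ dm) (hep : 0 ≤ ep) (hem : 0 ≤ em)
    (hpos : 0 < dp + dm + ep + em) :
    ∃ c : ℝ, 0 < c ∧ ∀ N : ℕ, 3 ≤ N → ∀ v : ℕ → ℝ,
      v 0 = 0 → v N = 0 →
      ip N (L / N) (dop α β N (L / N) dp dm ep em v) v ≤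
        -(c * Real.log 2) * (gnorm N (L / N) v) ^ 2 := by
  have hlog : 0 < Real.log 2 := Real.log_pos one_lt_two
  set a : ℝ := α*(1-α)/2 with ha_def
  set b : ℝ := (β-1)*(2-β)^2/2 with hb_def
  have ha : 0 < a := by nlinarith
  have hb : 0 < b := by nlinarith [mul_pos (show (0:ℝ) < β-1 by linarith) (show (0:ℝ) < (2-β)^2 by nlinarith)]
  have hX : 0 < a * L^(-α) := mul_pos ha (Real.rpow_pos_of_pos hL _)
  have hY : 0 < b * L^(-β) := mul_pos hb (Real.rpow_pos_of_pos hL _)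
  set K : ℝ := (dp+dm)*(a*L^(-α)) + (ep+em)*(b*L^(-β)) with hK_def
  have hK : 0 < K := by
    rcases lt_or_ge 0 (dp+dm) with h1 | h1
    · have := mul_pos h1 hX
      have := mul_nonneg (show (0:ℝ) ≤ ep+em by linarith) hY.le
      nlinarith
    · have h2 : 0 < ep+em := by nlinarith
      have := mul_pos h2 hY
      have := mul_nonneg (show (0:ℝ) ≤ dp+dm by linarith) hX.le
      nlinarith
  refine ⟨K / Real.log 2, div_pos hK hlog, ?_⟩
  intro N hN v hv0 hvN
  have hcK : K / Real.log 2 * Real.log 2 = K := div_mul_cancel₀ K (ne_of_gt hlog)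
  have hNpos : (0:ℝ) < (N:ℝ) := by
    have : (3:ℝ) ≤ (N:ℝ) := by exact_mod_cast hN
    linarith
  set h : ℝ := L / (N:ℝ) with hh_def
  have hhpos : 0 < h := div_pos hL hNpos
  set T := Finset.Icc (1:ℤ) ((N:ℤ)-1) with hT_def
  set E : ℝ := ∑ i ∈ T, (wz N v i)^2 with hE_def
  have hEnn : 0 ≤ E := Finset.sum_nonneg fun i _ => sq_nonneg _
  set CZ : ℤ → ℝ := fun d => ∑ i ∈ T, wz N v (i+d) * wz N v i with hCZ_def
  have hCle : ∀ d, CZ d ≤ E := fun d => cz_le N v hv0 hvN d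
  have hC0 : CZ 0 = E := by
    apply Finset.sum_congr rfl
    intro i _
    rw [add_zero, sq]
  have hCsymm : CZ (-1) = CZ 1 := cz_symm N v hv0 hvN hN
  -- the E over ℕ
  have hEnat : E = ∑ i ∈ Finset.Icc 1 (N-1), v i * v i := by
    rw [hE_def, ← natIcc_to_intIcc N (by omega) (fun j => (wz N v j)^2)]
    apply Finset.sum_congr rfl
    intro i hi
    simp only [Finset.mem_Icc] at hi
    rw [wz_natcast N v i (by omega), sq]
  -- norm
  have hipvv : ip N h v v = h * E := by rw [show ip N h v v = h * ∑ i ∈ Finset.Icc 1 (N-1), v i * v i from rfl, hEnat]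
  have hvvnn : 0 ≤ ip N h v v := by rw [hipvv]; exact mul_nonneg hhpos.le hEnn
  have hgnorm : (gnorm N h v)^2 = h * E := by
    rw [gnorm, Real.sq_sqrt hvvnn, hipvv]
  -- rpow arithmetic
  have hmul : ∀ γ : ℝ, h^(-γ) * (N:ℝ)^(-γ) = L^(-γ) := by
    intro γ
    rw [hh_def, Real.div_rpow hL.le hNpos.le]
    field_simp
  -- sums of wcoef
  set Sα : ℝ := ∑ k ∈ Finset.range (N+1), wcoef α k with hSα_def
  set Sβ : ℝ := ∑ k ∈ Finset.range (N+1), wcoef β k with hSβ_def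
  have hSα : a * (N:ℝ)^(-α) ≤ Sα := wsum_alpha_ge hα0 hα1 N hN
  have hSβ : Sβ ≤ -b * (N:ℝ)^(-β) := by
    have := wsum_beta_le hβ1 hβ2 N hN
    calc Sβ ≤ -((β-1)*(2-β)^2/2) * (N:ℝ)^(-β) := this
      _ = -b * (N:ℝ)^(-β) := by rw [hb_def]
  -- the four R quantities and their bounds
  set Rpα : ℝ := ∑ k ∈ Finset.range (N+1), wcoef α k * CZ (1-(k:ℤ)) with hRpα_def
  set Rmα : ℝ := ∑ k ∈ Finset.range (N+1), wcoef α k * CZ ((k:ℤ)-1) with hRmα_def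
  set Rpβ : ℝ := ∑ k ∈ Finset.range (N+1), wcoef β k * CZ (1-(k:ℤ)) with hRpβ_def
  set Rmβ : ℝ := ∑ k ∈ Finset.range (N+1), wcoef β k * CZ ((k:ℤ)-1) with hRmβ_def
  have hφp : ∀ γ : ℝ, (fun k : ℕ => CZ (1-(k:ℤ))) 1 = E ∧
      (fun k : ℕ => CZ (1-(k:ℤ))) 0 = (fun k : ℕ => CZ (1-(k:ℤ))) 2 := by
    intro γ
    constructor
    · show CZ (1-((1:ℕ):ℤ)) = E
      norm_num [hC0]
    · show CZ (1-((0:ℕ):ℤ)) = CZ (1-((2:ℕ):ℤ))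
      norm_num [hCsymm]
  have hRpα_ge : Sα * E ≤ Rpα :=
    key_low hα0 hα1 hN (fun k : ℕ => CZ (1-(k:ℤ))) (hφp α).1 (hφp α).2 (fun k => hCle _)
  have hRmα_ge : Sα * E ≤ Rmα := by
    apply key_low hα0 hα1 hN (fun k : ℕ => CZ ((k:ℤ)-1)) _ _ (fun k => hCle _)
    · show CZ (((1:ℕ):ℤ)-1) = E
      norm_num [hC0]
    · show CZ (((0:ℕ):ℤ)-1) = CZ (((2:ℕ):ℤ)-1)
      norm_num [hCsymm]
  have hRpβ_le : Rpβ ≤ Sβ * E :=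
    key_high hβ1 hβ2 hN (fun k : ℕ => CZ (1-(k:ℤ))) (hφp β).1 (hφp β).2 (fun k => hCle _)
  have hRmβ_le : Rmβ ≤ Sβ * E := by
    apply key_high hβ1 hβ2 hN (fun k : ℕ => CZ ((k:ℤ)-1)) _ _ (fun k => hCle _)
    · show CZ (((1:ℕ):ℤ)-1) = E
      norm_num [hC0]
    · show CZ (((0:ℕ):ℤ)-1) = CZ (((2:ℕ):ℤ)-1)
      norm_num [hCsymm]
  -- expand the inner product
  have hterm : ∀ i ∈ Finset.Icc 1 (N-1), dop α β N h dp dm ep em v i * v i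
      = -dp * (dplus α h v i * v i) - dm * (dminus α N h v i * v i)
        + ep * (dplus β h v i * v i) + em * (dminus β N h v i * v i) := by
    intro i _
    rw [dop]; ring
  have hsplit : ∑ i ∈ Finset.Icc 1 (N-1), dop α β N h dp dm ep em v i * v i
      = -dp * (h^(-α) * Rpα) - dm * (h^(-α) * Rmα)
        + ep * (h^(-β) * Rpβ) + em * (h^(-β) * Rmβ) := by
    rw [Finset.sum_congr rfl hterm]
    rw [Finset.sum_add_distrib, Finset.sum_add_distrib, Finset.sum_sub_distrib]
    rw [← Finset.mul_sum, ← Finset.mul_sum, ← Finset.mul_sum, ← Finset.mul_sum]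
    rw [opsum_plus N v hN α h, opsum_minus N v hN α h,
      opsum_plus N v hN β h, opsum_minus N v hN β h]
  -- bounds on the four pieces
  have hra : 0 < h^(-α) := Real.rpow_pos_of_pos hhpos _
  have hrb : 0 < h^(-β) := Real.rpow_pos_of_pos hhpos _
  have tα : (a*L^(-α))*E ≤ h^(-α) * Rpα := by
    have t1 : a*(N:ℝ)^(-α) * E ≤ Sα * E := mul_le_mul_of_nonneg_right hSα hEnn
    have t3 : h^(-α) * (a*(N:ℝ)^(-α) * E) ≤ h^(-α) * Rpα :=
      mul_le_mul_of_nonneg_left (t1.trans hRpα_ge) hra.le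
    calc (a*L^(-α))*E = a * (h^(-α) * (N:ℝ)^(-α)) * E := by rw [hmul α]
      _ = h^(-α) * (a*(N:ℝ)^(-α) * E) := by ring
      _ ≤ h^(-α) * Rpα := t3
  have tα' : (a*L^(-α))*E ≤ h^(-α) * Rmα := by
    have t1 : a*(N:ℝ)^(-α) * E ≤ Sα * E := mul_le_mul_of_nonneg_right hSα hEnn
    have t3 : h^(-α) * (a*(N:ℝ)^(-α) * E) ≤ h^(-α) * Rmα :=
      mul_le_mul_of_nonneg_left (t1.trans hRmα_ge) hra.le
    calc (a*L^(-α))*E = a * (h^(-α) * (N:ℝ)^(-α)) * E := by rw [hmul α]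
      _ = h^(-α) * (a*(N:ℝ)^(-α) * E) := by ring
      _ ≤ h^(-α) * Rmα := t3
  have tβ : h^(-β) * Rpβ ≤ -((b*L^(-β))*E) := by
    have t1 : Sβ * E ≤ (-b*(N:ℝ)^(-β)) * E := mul_le_mul_of_nonneg_right hSβ hEnn
    have t3 : h^(-β) * Rpβ ≤ h^(-β) * ((-b*(N:ℝ)^(-β)) * E) :=
      mul_le_mul_of_nonneg_left (hRpβ_le.trans t1) hrb.le
    calc h^(-β) * Rpβ ≤ h^(-β) * ((-b*(N:ℝ)^(-β)) * E) := t3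
      _ = -(b * (h^(-β)*(N:ℝ)^(-β)) * E) := by ring
      _ = -((b*L^(-β))*E) := by rw [hmul β]
  have tβ' : h^(-β) * Rmβ ≤ -((b*L^(-β))*E) := by
    have t1 : Sβ * E ≤ (-b*(N:ℝ)^(-β)) * E := mul_le_mul_of_nonneg_right hSβ hEnn
    have t3 : h^(-β) * Rmβ ≤ h^(-β) * ((-b*(N:ℝ)^(-β)) * E) :=
      mul_le_mul_of_nonneg_left (hRmβ_le.trans t1) hrb.le
    calc h^(-β) * Rmβ ≤ h^(-β) * ((-b*(N:ℝ)^(-β)) * E) := t3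
      _ = -(b * (h^(-β)*(N:ℝ)^(-β)) * E) := by ring
      _ = -((b*L^(-β))*E) := by rw [hmul β]
  have hsum_le : ∑ i ∈ Finset.Icc 1 (N-1), dop α β N h dp dm ep em v i * v i ≤ -K * E := by
    rw [hsplit]
    have b1 : -dp * (h^(-α) * Rpα) ≤ -(dp * ((a*L^(-α))*E)) := by
      linarith [mul_le_mul_of_nonneg_left tα hdp]
    have b2 : -dm * (h^(-α) * Rmα) ≤ -(dm * ((a*L^(-α))*E)) := by
      linarith [mul_le_mul_of_nonneg_left tα' hdm]
    have b3 : ep * (h^(-β) * Rpβ) ≤ -(ep * ((b*L^(-β))*E)) := by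
      linarith [mul_le_mul_of_nonneg_left tβ hep]
    have b4 : em * (h^(-β) * Rmβ) ≤ -(em * ((b*L^(-β))*E)) := by
      linarith [mul_le_mul_of_nonneg_left tβ' hem]
    have : -(dp * ((a*L^(-α))*E)) - (dm * ((a*L^(-α))*E))
        - (ep * ((b*L^(-β))*E)) - (em * ((b*L^(-β))*E)) = -K * E := by
      rw [hK_def]; ring
    linarith
  -- final
  rw [show ip N h (dop α β N h dp dm ep em v) v = h * ∑ i ∈ Finset.Icc 1 (N-1), dop α β N h dp dm ep em v i * v i from rfl, hgnorm, hcK]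
  calc h * ∑ i ∈ Finset.Icc 1 (N-1), dop α β N h dp dm ep em v i * v i
      ≤ h * (-K * E) := mul_le_mul_of_nonneg_left hsum_le hhpos.le
    _ = -K * (h * E) := by ring
end
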